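/- Suppose Assumption: f continuously differentiable, φ strongly convex continuously differentiable with Lφ − f, lφ + f convex; g proper lsc convex; h convex; F = f + g − h bounded below. Let (x^k) be generated by DCAe. If x* is a limit point of (x^k), then x* is a critical point of F, i.e., [∇f(x*) + ∂g(x*)] ∩ ∂h(x*) ≠ ∅. -/

import Mathlib

open Filter Topology

/-- Bregman distance associated with `φ`. -/
noncomputable def Dphi {E : Type*} [NormedAddCommGroup E] [InnerProductSpace ℝ E]
    [CompleteSpace E] (φ : E → ℝ) (x y : E) : ℝ :=
  φ x - φ y - (inner ℝ (gradient φ y) (x - y) : ℝ)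

/-- Convex subdifferential of `h` at `x`. -/
def ConvexSubdiff {E : Type*} [NormedAddCommGroup E] [InnerProductSpace ℝ E]
    (h : E → ℝ) (x : E) : Set E :=
  {ξ | ∀ z, h x + (inner ℝ ξ (z - x) : ℝ) ≤ h z}

section Aux

variable {E : Type*} [NormedAddCommGroup E] [InnerProductSpace ℝ E] [CompleteSpace E]

set_option linter.unusedSectionVars false

lemma inner_gradient_eq' (f : E → ℝ) (p v : E) :
    (inner ℝ (gradient f p) v : ℝ) = fderiv ℝ f p v := by
  rw [gradient]; exact InnerProductSpace.toDual_symm_apply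

lemma convex_fderiv_ineq' {ψ : E → ℝ} (hc : ConvexOn ℝ Set.univ ψ) {D : E →L[ℝ] ℝ} {b : E}
    (hD : HasFDerivAt ψ D b) (a : E) : ψ b + D (a - b) ≤ ψ a := by
  set q : ℝ → ℝ := fun t => ψ (t • (a - b) + b) with hq
  have hqconv : ConvexOn ℝ Set.univ q := by
    have := hc.comp_affineMap (AffineMap.lineMap b a : ℝ →ᵃ[ℝ] E)
    simp only [Set.preimage_univ] at this
    have he : q = ψ ∘ (AffineMap.lineMap b a) := by
      funext t; simp only [q, Function.comp_apply, AffineMap.lineMap_apply_module]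
      congr 1; module
    rw [he]; exact this
  have hγ : HasDerivAt (fun t : ℝ => t • (a - b) + b) (a - b) 0 := by
    simpa using ((hasDerivAt_id (0:ℝ)).smul_const (a - b)).add_const b
  have hq0 : HasDerivAt q (D (a - b)) 0 := by
    have hD' : HasFDerivAt ψ D ((0:ℝ) • (a - b) + b) := by simpa using hD
    exact hD'.comp_hasDerivAt (0:ℝ) hγ
  have := hqconv.le_slope_of_hasDerivAt (Set.mem_univ 0) (Set.mem_univ 1) zero_lt_one hq0
  rw [slope_def_field] at this
  simp only [q, one_smul, zero_smul, zero_add, sub_add_cancel] at this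
  linarith [this]

lemma gradient_continuous' {f : E → ℝ} (hf : ContDiff ℝ 1 f) :
    Continuous (fun p => gradient f p) := by
  simp only [gradient]
  exact (InnerProductSpace.toDual ℝ E).symm.continuous.comp (hf.continuous_fderiv one_ne_zero)

/-- Strong convexity lower bound on the Bregman distance. -/
lemma Dphi_lower' {φ : E → ℝ} {ρ : ℝ} (hρ : 0 < ρ) (hφ : ContDiff ℝ 1 φ)
    (hφsc : ConvexOn ℝ Set.univ (fun x => φ x - ρ / 2 * ‖x‖ ^ 2)) (a b : E) :
    ρ / 2 * ‖a - b‖ ^ 2 ≤ Dphi φ a b := by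
  have hn : HasFDerivAt (fun x : E => ρ / 2 * ‖x‖ ^ 2) ((ρ/2) • (2 • (innerSL ℝ b))) b :=
    ((hasStrictFDerivAt_norm_sq b).hasFDerivAt).const_mul (ρ/2)
  have hD : HasFDerivAt (fun x => φ x - ρ / 2 * ‖x‖ ^ 2)
      (fderiv ℝ φ b - (ρ/2) • (2 • (innerSL ℝ b))) b :=
    ((hφ.differentiable one_ne_zero b).hasFDerivAt).sub hn
  have := convex_fderiv_ineq' hφsc hD a
  simp only [ContinuousLinearMap.sub_apply, ContinuousLinearMap.smul_apply,
    ContinuousLinearMap.coe_smul', Pi.smul_apply, innerSL_apply_apply, smul_eq_mul, nsmul_eq_mul,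
    Nat.cast_ofNat] at this
  have hid : ‖a - b‖ ^ 2 = ‖a‖ ^ 2 - 2 * (inner ℝ b a : ℝ) + ‖b‖ ^ 2 := by
    rw [norm_sub_sq_real]; rw [real_inner_comm]
  have hib : (inner ℝ b (a - b) : ℝ) = (inner ℝ b a : ℝ) - ‖b‖ ^ 2 := by
    rw [inner_sub_right, real_inner_self_eq_norm_sq]
  rw [Dphi, inner_gradient_eq']
  nlinarith [this]

/-- If `w` minimizes `z ↦ L φ z + g z - ⟪c, z⟫` then `c - L ∇φ w ∈ ∂g(w)`. -/
lemma subdiff_of_min' {φ g : E → ℝ} {L : ℝ} (hg : ConvexOn ℝ Set.univ g)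
    (hφ : ContDiff ℝ 1 φ) {c w : E}
    (hmin : ∀ z, L * φ w + g w - (inner ℝ c w : ℝ) ≤ L * φ z + g z - (inner ℝ c z : ℝ)) :
    ∀ z, g w + (inner ℝ (c - L • gradient φ w) (z - w) : ℝ) ≤ g z := by
  intro z
  set q : ℝ → ℝ := fun t => L * φ (t • (z - w) + w) with hqdef
  have key : ∀ t ∈ Set.Ioc (0:ℝ) 1,
      g w + (inner ℝ c (z - w) : ℝ) - g z ≤ slope q 0 t := by
    intro t ht
    obtain ⟨ht0, ht1⟩ := ht
    have hz : t • (z - w) + w = (1 - t) • w + t • z := by module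
    have hgc : g (t • (z - w) + w) ≤ (1 - t) * g w + t * g z := by
      rw [hz]
      exact hg.2 (Set.mem_univ w) (Set.mem_univ z) (by linarith) ht0.le (by ring)
    have hic : (inner ℝ c (t • (z - w) + w) : ℝ) = t * (inner ℝ c (z - w) : ℝ) + (inner ℝ c w : ℝ) := by
      rw [inner_add_right, real_inner_smul_right]
    have hm := hmin (t • (z - w) + w)
    rw [slope_def_field, sub_zero, le_div_iff₀ ht0]
    simp only [q, zero_smul, zero_add]
    nlinarith [hm, hgc, hic]
  have hγ : HasDerivAt (fun t : ℝ => t • (z - w) + w) (z - w) 0 := by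
    simpa using ((hasDerivAt_id (0:ℝ)).smul_const (z - w)).add_const w
  have hD' : HasFDerivAt φ (fderiv ℝ φ w) ((0:ℝ) • (z - w) + w) := by
    simpa using (hφ.differentiable one_ne_zero w).hasFDerivAt
  have hq0 : HasDerivAt q (L * fderiv ℝ φ w (z - w)) 0 :=
    (hD'.comp_hasDerivAt (0:ℝ) hγ).const_mul L
  have hslope : Tendsto (slope q 0) (𝓝[>] (0:ℝ)) (𝓝 (L * fderiv ℝ φ w (z - w))) := by
    have := hasDerivAt_iff_tendsto_slope.mp hq0
    exact this.mono_left (nhdsWithin_mono 0 (fun t ht => ne_of_gt ht))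
  have hfinal : g w + (inner ℝ c (z - w) : ℝ) - g z ≤ L * fderiv ℝ φ w (z - w) := by
    refine ge_of_tendsto hslope ?_
    filter_upwards [Ioc_mem_nhdsGT zero_lt_one] with t ht
    exact key t ht
  have hexp : (inner ℝ (c - L • gradient φ w) (z - w) : ℝ)
      = (inner ℝ c (z - w) : ℝ) - L * fderiv ℝ φ w (z - w) := by
    rw [inner_sub_left, real_inner_smul_left, inner_gradient_eq']
  linarith [hfinal, hexp.le, hexp.ge]

end Aux

theorem stmt7 {E : Type*} [NormedAddCommGroup E] [InnerProductSpace ℝ E]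
    [FiniteDimensional ℝ E]
    (f g h φ : E → ℝ) (L l ρ δ : ℝ) (hL : 0 < L) (hl : 0 ≤ l) (hρ : 0 < ρ)
    (hδ : δ ∈ Set.Ioo (0 : ℝ) 1)
    (hf : ContDiff ℝ 1 f) (hφ : ContDiff ℝ 1 φ)
    (hφsc : ConvexOn ℝ Set.univ (fun x => φ x - ρ / 2 * ‖x‖ ^ 2))
    (hLf : ConvexOn ℝ Set.univ (fun x => L * φ x - f x))
    (hlf : ConvexOn ℝ Set.univ (fun x => l * φ x + f x))
    (hg : ConvexOn ℝ Set.univ g) (hglsc : LowerSemicontinuous g)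
    (hh : ConvexOn ℝ Set.univ h)
    (hFbdd : BddBelow (Set.range (fun x => f x + g x - h x)))
    (x y ξ : ℕ → E) (β : ℕ → ℝ) (hβ : ∀ k, β k ∈ Set.Ico (0 : ℝ) 1)
    (hy : ∀ k, y k = x k + β k • (x k - x (k - 1)))
    (hext : ∀ k, (L + l) * Dphi φ (x k) (y k) ≤ δ * L * Dphi φ (x (k - 1)) (x k))
    (hξ : ∀ k, ξ k ∈ ConvexSubdiff h (x k))
    (hmin : ∀ k, ∀ z : E,
      L * φ (x (k + 1)) + g (x (k + 1))
          - (inner ℝ (L • gradient φ (y k) - gradient f (y k) + ξ k) (x (k + 1)) : ℝ)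
        ≤ L * φ z + g z
          - (inner ℝ (L • gradient φ (y k) - gradient f (y k) + ξ k) z : ℝ))
    (xstar : E) (kj : ℕ → ℕ) (hmono : StrictMono kj)
    (hlim : Tendsto (fun j => x (kj j)) atTop (nhds xstar)) :
    ∃ v ∈ ConvexSubdiff g xstar, gradient f xstar + v ∈ ConvexSubdiff h xstar := by
  obtain ⟨hδ0, hδ1⟩ := hδ
  have hcontφ : Continuous fun p => gradient φ p := gradient_continuous' hφ
  have hcontf : Continuous fun p => gradient f p := gradient_continuous' hf
  have hconth : Continuous h := continuousOn_univ.mp (hh.continuousOn isOpen_univ)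
  have hstar : ∀ k z, g (x (k+1)) + (inner ℝ (L • gradient φ (y k) - gradient f (y k) + ξ k
      - L • gradient φ (x (k+1))) (z - x (k+1)) : ℝ) ≤ g z :=
    fun k => subdiff_of_min' hg hφ (hmin k)
  have hDnn : ∀ a b : E, 0 ≤ Dphi φ a b := fun a b =>
    le_trans (by positivity) (Dphi_lower' hρ hφ hφsc a b)
  have hBineq : ∀ b a : E, L * φ b - f b + (L * (inner ℝ (gradient φ b) (a - b) : ℝ)
      - (inner ℝ (gradient f b) (a - b) : ℝ)) ≤ L * φ a - f a := by
    intro b a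
    have hD : HasFDerivAt (fun p => L * φ p - f p) (L • fderiv ℝ φ b - fderiv ℝ f b) b :=
      (((hφ.differentiable one_ne_zero b).hasFDerivAt).const_mul L).sub
        (hf.differentiable one_ne_zero b).hasFDerivAt
    have := convex_fderiv_ineq' hLf hD a
    simpa [inner_gradient_eq', ContinuousLinearMap.sub_apply, ContinuousLinearMap.smul_apply,
      smul_eq_mul] using this
  have hCineq : ∀ b a : E, l * φ b + f b + (l * (inner ℝ (gradient φ b) (a - b) : ℝ)
      + (inner ℝ (gradient f b) (a - b) : ℝ)) ≤ l * φ a + f a := by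
    intro b a
    have hD : HasFDerivAt (fun p => l * φ p + f p) (l • fderiv ℝ φ b + fderiv ℝ f b) b :=
      (((hφ.differentiable one_ne_zero b).hasFDerivAt).const_mul l).add
        (hf.differentiable one_ne_zero b).hasFDerivAt
    have := convex_fderiv_ineq' hlf hD a
    simpa [inner_gradient_eq', ContinuousLinearMap.add_apply, ContinuousLinearMap.smul_apply,
      smul_eq_mul] using this
  have hdesc : ∀ k, f (x (k+1)) + g (x (k+1)) - h (x (k+1)) + L * Dphi φ (x k) (x (k+1))
      ≤ f (x k) + g (x k) - h (x k) + δ * L * Dphi φ (x (k-1)) (x k) := by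
    intro k
    have h1 := hstar k (x k)
    have h2 := hBineq (y k) (x (k+1))
    have h3 := hCineq (y k) (x k)
    have h4 : h (x k) + (inner ℝ (ξ k) (x (k+1) - x k) : ℝ) ≤ h (x (k+1)) := hξ k (x (k+1))
    have h5 := hext k
    simp only [Dphi, inner_sub_left, inner_add_left, inner_sub_right,
      real_inner_smul_left] at h1 h2 h3 h4 h5 ⊢
    linarith
  obtain ⟨B, hB0⟩ := hFbdd
  have hFge : ∀ k, B ≤ f (x k) + g (x k) - h (x k) := fun k => hB0 ⟨x k, rfl⟩
  set e : ℕ → ℝ := fun k => f (x k) + g (x k) - h (x k) + δ * L * Dphi φ (x (k-1)) (x k) with he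
  have hgap : ∀ k, e (k+1) + (1-δ) * L * Dphi φ (x k) (x (k+1)) ≤ e k := by
    intro k
    have h1 := hdesc k
    simp only [e, Nat.add_sub_cancel]
    nlinarith [h1]
  have hanti : Antitone e := antitone_nat_of_succ_le fun k => by
    have h1 := hgap k
    have h2 := hDnn (x k) (x (k+1))
    have h3 : 0 ≤ (1-δ) * L * Dphi φ (x k) (x (k+1)) :=
      mul_nonneg (mul_nonneg (by linarith) hL.le) h2
    linarith
  have hbdd : BddBelow (Set.range e) := by
    refine ⟨B, ?_⟩
    rintro r ⟨k, rfl⟩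
    have h2 := hDnn (x (k-1)) (x k)
    have h3 : 0 ≤ δ * L * Dphi φ (x (k-1)) (x k) := mul_nonneg (mul_nonneg hδ0.le hL.le) h2
    have := hFge k
    simp only [e]; linarith
  have hconv := tendsto_atTop_ciInf hanti hbdd
  have hconv' : Tendsto (fun k => e (k+1)) atTop (𝓝 (⨅ i, e i)) :=
    hconv.comp (tendsto_add_atTop_nat 1)
  have hgap0 : Tendsto (fun k => e k - e (k+1)) atTop (𝓝 0) := by
    simpa using hconv.sub hconv'
  have hposc : (0:ℝ) < (1-δ) * L := mul_pos (by linarith) hL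
  have hD0 : Tendsto (fun k => Dphi φ (x k) (x (k+1))) atTop (𝓝 0) := by
    refine squeeze_zero (fun k => hDnn _ _) (g := fun k => (e k - e (k+1)) / ((1-δ)*L))
      (fun k => ?_) ?_
    · rw [le_div_iff₀ hposc]; have := hgap k; nlinarith
    · simpa using hgap0.div_const ((1-δ)*L)
  have hstep : Tendsto (fun k => x (k+1) - x k) atTop (𝓝 0) := by
    refine squeeze_zero_norm (a := fun k => Real.sqrt (2/ρ * Dphi φ (x k) (x (k+1))))
      (fun k => ?_) ?_
    · rw [Real.le_sqrt (norm_nonneg _) (mul_nonneg (by positivity) (hDnn _ _))]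
      have hlow := Dphi_lower' hρ hφ hφsc (x k) (x (k+1))
      rw [norm_sub_rev] at hlow
      rw [div_mul_eq_mul_div, le_div_iff₀ hρ]
      nlinarith [hlow]
    · have := (hD0.const_mul (2/ρ)).sqrt
      simpa using this
  -- boundedness of ξ along the subsequence
  have hK : IsCompact (insert xstar (Set.range fun j => x (kj j))) := hlim.isCompact_insert_range
  obtain ⟨R, hR⟩ := hK.isBounded.subset_closedBall xstar
  have hRx : ∀ j, x (kj j) ∈ Metric.closedBall xstar R :=
    fun j => hR (Set.mem_insert_of_mem _ ⟨j, rfl⟩)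
  have hR0 : 0 ≤ R := by
    have := hRx 0
    simp only [Metric.mem_closedBall] at this
    exact le_trans dist_nonneg this
  obtain ⟨C, hC⟩ :=
    (isCompact_closedBall xstar (R+1)).exists_bound_of_continuousOn hconth.continuousOn
  have hC0 : 0 ≤ C := le_trans (norm_nonneg _)
    (hC xstar (by simp only [Metric.mem_closedBall, dist_self]; linarith))
  have hξbdd : ∀ j, ξ (kj j) ∈ Metric.closedBall (0:E) (2*C) := by
    intro j
    simp only [Metric.mem_closedBall, dist_zero_right]
    rcases eq_or_ne (ξ (kj j)) 0 with h0 | h0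
    · rw [h0]; simpa using by positivity
    · set u : E := ‖ξ (kj j)‖⁻¹ • ξ (kj j) with hu
      have hun : ‖u‖ = 1 := by
        simp [hu, norm_smul, inv_mul_cancel₀ (norm_ne_zero_iff.mpr h0)]
      have hz : h (x (kj j)) + (inner ℝ (ξ (kj j)) ((x (kj j) + u) - x (kj j)) : ℝ)
          ≤ h (x (kj j) + u) := hξ (kj j) (x (kj j) + u)
      have hiu : (inner ℝ (ξ (kj j)) ((x (kj j) + u) - x (kj j)) : ℝ) = ‖ξ (kj j)‖ := by
        have hne : ‖ξ (kj j)‖ ≠ 0 := norm_ne_zero_iff.mpr h0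
        rw [add_sub_cancel_left, hu, real_inner_smul_right, real_inner_self_eq_norm_sq]
        field_simp
      have hm1 : x (kj j) ∈ Metric.closedBall xstar (R+1) :=
        Metric.closedBall_subset_closedBall (by linarith) (hRx j)
      have hm2 : x (kj j) + u ∈ Metric.closedBall xstar (R+1) := by
        have hb := hRx j
        simp only [Metric.mem_closedBall] at hb ⊢
        calc dist (x (kj j) + u) xstar
            ≤ dist (x (kj j) + u) (x (kj j)) + dist (x (kj j)) xstar := dist_triangle _ _ _
          _ ≤ 1 + R := by
              rw [dist_eq_norm, add_sub_cancel_left, hun]; linarith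
          _ = R + 1 := by ring
      have hb1 := hC _ hm1
      have hb2 := hC _ hm2
      rw [Real.norm_eq_abs] at hb1 hb2
      have l1 := (abs_le.mp hb1).1
      have l2 := (abs_le.mp hb2).2
      rw [hiu] at hz
      linarith
  obtain ⟨ξstar, -, ψ, hψ, hξconv⟩ :=
    tendsto_subseq_of_bounded (Metric.isBounded_closedBall (x := (0:E)) (r := 2*C)) hξbdd
  set m : ℕ → ℕ := fun j => kj (ψ j) with hm
  have hm_at : Tendsto m atTop atTop := (hmono.comp hψ).tendsto_atTop
  have hxm : Tendsto (fun j => x (m j)) atTop (𝓝 xstar) := hlim.comp hψ.tendsto_atTop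
  have hξm : Tendsto (fun j => ξ (m j)) atTop (𝓝 ξstar) := hξconv
  have hx1 : Tendsto (fun j => x (m j + 1)) atTop (𝓝 xstar) := by
    have hterm : Tendsto (fun j => x (m j + 1) - x (m j)) atTop (𝓝 0) := hstep.comp hm_at
    have := hterm.add hxm
    simp only [zero_add, sub_add_cancel] at this
    exact this
  have hs0 : Tendsto (fun k => x k - x (k-1)) atTop (𝓝 0) := by
    rw [← tendsto_add_atTop_iff_nat 1]
    simpa using hstep
  have hym : Tendsto (fun j => y (m j)) atTop (𝓝 xstar) := by
    have hterm : Tendsto (fun j => β (m j) • (x (m j) - x (m j - 1))) atTop (𝓝 0) := by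
      refine squeeze_zero_norm (a := fun j => ‖x (m j) - x (m j - 1)‖) (fun j => ?_) ?_
      · rw [norm_smul, Real.norm_eq_abs, abs_of_nonneg (hβ (m j)).1]
        have := (hβ (m j)).2
        nlinarith [norm_nonneg (x (m j) - x (m j - 1))]
      · have := (hs0.comp hm_at).norm
        simpa using this
    have := hxm.add hterm
    simp only [add_zero] at this
    simp only [hy]
    exact this
  set u : ℕ → E := fun j => L • gradient φ (y (m j)) - gradient f (y (m j)) + ξ (m j)
    - L • gradient φ (x (m j + 1)) with hudef
  have hu : Tendsto u atTop (𝓝 (ξstar - gradient f xstar)) := by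
    have t1 : Tendsto (fun j => gradient φ (y (m j))) atTop (𝓝 (gradient φ xstar)) :=
      (hcontφ.tendsto xstar).comp hym
    have t2 : Tendsto (fun j => gradient f (y (m j))) atTop (𝓝 (gradient f xstar)) :=
      (hcontf.tendsto xstar).comp hym
    have t3 : Tendsto (fun j => gradient φ (x (m j + 1))) atTop (𝓝 (gradient φ xstar)) :=
      (hcontφ.tendsto xstar).comp hx1
    have := (((t1.const_smul L).sub t2).add hξm).sub (t3.const_smul L)
    have heq : L • gradient φ xstar - gradient f xstar + ξstar - L • gradient φ xstar
        = ξstar - gradient f xstar := by abel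
    rw [heq] at this
    exact this
  refine ⟨ξstar - gradient f xstar, ?_, ?_⟩
  · intro z
    have hct : Tendsto (fun j => (inner ℝ (u j) (z - x (m j + 1)) : ℝ)) atTop
        (𝓝 (inner ℝ (ξstar - gradient f xstar) (z - xstar) : ℝ)) :=
      hu.inner (tendsto_const_nhds.sub hx1)
    set cI := (inner ℝ (ξstar - gradient f xstar) (z - xstar) : ℝ) with hcinf
    by_contra hcon
    push_neg at hcon
    have hε0 : 0 < (g xstar + cI - g z) / 3 := by linarith
    set ε := (g xstar + cI - g z) / 3 with hε
    have ev1 : ∀ᶠ j in atTop, g xstar - ε < g (x (m j + 1)) :=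
      hx1.eventually (hglsc xstar (g xstar - ε) (by linarith))
    have ev2 : ∀ᶠ j in atTop, cI - ε < (inner ℝ (u j) (z - x (m j + 1)) : ℝ) :=
      hct.eventually (eventually_gt_nhds (by linarith))
    obtain ⟨j, h1j, h2j⟩ := (ev1.and ev2).exists
    have h3 := hstar (m j) z
    have h4 : (inner ℝ (L • gradient φ (y (m j)) - gradient f (y (m j)) + ξ (m j)
        - L • gradient φ (x (m j + 1))) (z - x (m j + 1)) : ℝ)
        = (inner ℝ (u j) (z - x (m j + 1)) : ℝ) := rfl
    rw [h4] at h3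
    linarith
  · have hmem : ξstar ∈ ConvexSubdiff h xstar := by
      intro z
      have hterm : Tendsto (fun j => h (x (m j)) + (inner ℝ (ξ (m j)) (z - x (m j)) : ℝ)) atTop
          (𝓝 (h xstar + (inner ℝ ξstar (z - xstar) : ℝ))) :=
        ((hconth.tendsto xstar).comp hxm).add (hξm.inner (tendsto_const_nhds.sub hxm))
      exact le_of_tendsto hterm (Eventually.of_forall fun j => hξ (m j) z)
    have heq : gradient f xstar + (ξstar - gradient f xstar) = ξstar := by abel
    rw [heq]
    exact hmem
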